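/- arXiv:1311.4065 — 2 statements merged into one kernel-verified Lean document; each statement's English description precedes it below -/
import Mathlib

section
/- Let 0 < θ < 1/2 and set K₁(θ) := (2θ)^{-2θ}(1 − 2θ)^{θ−1}. Let g, h ∈ L²(ℝ₊) with ‖g‖_{L²} = ‖h‖_{L²}, A := ‖x^θ g(x)‖_{L²(ℝ₊)} < ∞ and B := ‖t^θ h(t)‖_{L²(ℝ₊)} < ∞. If for every r > 0 one has ∫_{[0,r)} |h(t)|² dt ≤ K₁(θ)² r^{2θ} A², then ‖g‖_{L²}² ≤ 2 K₁(θ) A B. -/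
open MeasureTheory Set Filter
open scoped ENNReal NNReal

noncomputable section

/-- The `j`-th binary digit of `x ∈ ℝ₊` in the expansion `x = ∑ x_j 2^{-j-1}`
    terminating in 0's for dyadic rationals. -/
def dDigit (x : ℝ) (j : ℤ) : ℕ := (⌊x * 2 ^ (j + 1)⌋).toNat % 2

/-- The dyadic sum `x ⊕ y`. -/
def dSum (x y : ℝ) : ℝ := ∑' j : ℤ, |(dDigit x j : ℝ) - (dDigit y j : ℝ)| * 2 ^ (-j - 1)

/-- The Walsh character `w(t,x) = (-1)^{∑ t_j x_{-j-1}}`. -/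
def walsh (t x : ℝ) : ℝ := (-1 : ℝ) ^ (∑' j : ℤ, dDigit t j * dDigit x (-j - 1))

/-- Lebesgue measure on `ℝ₊ = [0,∞)`. -/
def μplus : Measure ℝ := volume.restrict (Set.Ici 0)

/-- The Walsh–Fourier transform, as a pointwise integral (defined for `f ∈ L¹(ℝ₊)`). -/
def WFT (f : ℝ → ℂ) (t : ℝ) : ℂ := ∫ x, f x * (walsh t x : ℂ) ∂μplus

/-- numerator of `V(f)`:  `inf_{x̃ ∈ ℝ₊} ∫_{ℝ₊} (x ⊕ x̃)² |f(x)|² dx`. -/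
def Vnum (f : ℝ → ℂ) : ℝ≥0∞ :=
  ⨅ xt ∈ Set.Ici (0:ℝ), ∫⁻ x, ENNReal.ofReal ((dSum x xt) ^ 2) * (‖f x‖₊ : ℝ≥0∞) ^ 2 ∂μplus

/-- `V(f) = ‖f‖₂⁻² · inf_{x̃} ∫ (x ⊕ x̃)² |f(x)|² dx`. -/
def Vfun (f : ℝ → ℂ) : ℝ≥0∞ := Vnum f / ∫⁻ x, (‖f x‖₊ : ℝ≥0∞) ^ 2 ∂μplus

/-- `fhat` is the Walsh–Fourier transform of `f ∈ L²(ℝ₊)` in the sense of the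
    unitary `L²` extension: the transforms of the integrable truncations
    `f·χ_{[0,n)}` converge to `fhat` in `L²(ℝ₊)`. -/
def IsL2WFT (f fhat : ℝ → ℂ) : Prop :=
  Tendsto (fun n : ℕ =>
      eLpNorm (fun t => WFT (Set.indicator (Set.Ico (0:ℝ) (n:ℝ)) f) t - fhat t) 2 μplus)
    atTop (nhds 0)

lemma auxnonpos (x C : ℝ) (h : ∀ s : ℝ, 0 < s → x ≤ C * s) : x ≤ 0 := by
  by_contra hx
  push_neg at hx
  rcases le_or_gt C 0 with hC | hC
  · have := h 1 one_pos; nlinarith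
  · have h1 := h (x / (2 * C)) (by positivity)
    have h2 : C * (x / (2 * C)) = x / 2 := by field_simp
    linarith

/-- real-variable lemma. With `K₁(θ) = (2θ)^{-2θ}(1-2θ)^{θ-1}`, if
`g, h ∈ L²(ℝ₊)` have equal `L²` norms, finite moments `A = ‖x^θ g‖₂`, `B = ‖t^θ h‖₂`, and
`∫_{[0,r)} |h|² ≤ K₁(θ)² r^{2θ} A²` for all `r > 0`, then `‖g‖₂² ≤ 2 K₁(θ) A B`. -/
theorem stmt3 (θ : ℝ) (hθ0 : 0 < θ) (hθ : θ < 1/2)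
    (g h : ℝ → ℂ) (hg : MemLp g 2 μplus) (hh : MemLp h 2 μplus)
    (hnorm : (∫⁻ x, (‖g x‖₊ : ℝ≥0∞) ^ 2 ∂μplus) = ∫⁻ t, (‖h t‖₊ : ℝ≥0∞) ^ 2 ∂μplus)
    (hA : (∫⁻ x, ENNReal.ofReal (x ^ (2*θ)) * (‖g x‖₊ : ℝ≥0∞) ^ 2 ∂μplus) ≠ ∞)
    (hB : (∫⁻ t, ENNReal.ofReal (t ^ (2*θ)) * (‖h t‖₊ : ℝ≥0∞) ^ 2 ∂μplus) ≠ ∞)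
    (hyp : ∀ r : ℝ, 0 < r →
      (∫⁻ t in Set.Ico (0:ℝ) r, (‖h t‖₊ : ℝ≥0∞) ^ 2) ≤
        ENNReal.ofReal (((2*θ) ^ (-(2*θ)) * (1 - 2*θ) ^ (θ - 1)) ^ 2 * r ^ (2*θ)) *
          (∫⁻ x, ENNReal.ofReal (x ^ (2*θ)) * (‖g x‖₊ : ℝ≥0∞) ^ 2 ∂μplus)) :
    (∫⁻ x, (‖g x‖₊ : ℝ≥0∞) ^ 2 ∂μplus) ≤
      ENNReal.ofReal (2 * ((2*θ) ^ (-(2*θ)) * (1 - 2*θ) ^ (θ - 1))) *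
        (∫⁻ x, ENNReal.ofReal (x ^ (2*θ)) * (‖g x‖₊ : ℝ≥0∞) ^ 2 ∂μplus) ^ ((1:ℝ)/2) *
        (∫⁻ t, ENNReal.ofReal (t ^ (2*θ)) * (‖h t‖₊ : ℝ≥0∞) ^ 2 ∂μplus) ^ ((1:ℝ)/2) := by
  set K : ℝ := (2*θ) ^ (-(2*θ)) * (1 - 2*θ) ^ (θ - 1) with hKdef
  set IA := ∫⁻ x, ENNReal.ofReal (x ^ (2*θ)) * (‖g x‖₊ : ℝ≥0∞) ^ 2 ∂μplus with hIAdef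
  set IB := ∫⁻ t, ENNReal.ofReal (t ^ (2*θ)) * (‖h t‖₊ : ℝ≥0∞) ^ 2 ∂μplus with hIBdef
  set N := ∫⁻ x, (‖g x‖₊ : ℝ≥0∞) ^ 2 ∂μplus with hNdef
  have hθ2 : (0:ℝ) < 2*θ := by linarith
  have hKpos : 0 < K :=
    mul_pos (Real.rpow_pos_of_pos hθ2 _) (Real.rpow_pos_of_pos (by linarith) _)
  set a := IA.toReal with hadef
  set b := IB.toReal with hbdef
  have ha0 : 0 ≤ a := ENNReal.toReal_nonneg
  have hb0 : 0 ≤ b := ENNReal.toReal_nonneg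
  have hIAa : IA = ENNReal.ofReal a := (ENNReal.ofReal_toReal hA).symm
  have hIBb : IB = ENNReal.ofReal b := (ENNReal.ofReal_toReal hB).symm
  -- tail estimate
  have tail : ∀ r : ℝ, 0 < r →
      (∫⁻ t in Set.Ici r, (‖h t‖₊ : ℝ≥0∞) ^ 2) ≤ ENNReal.ofReal (r ^ (-(2*θ))) * IB := by
    intro r hr
    calc (∫⁻ t in Set.Ici r, (‖h t‖₊ : ℝ≥0∞) ^ 2)
        ≤ ∫⁻ t in Set.Ici r,
            ENNReal.ofReal (r ^ (-(2*θ))) * (ENNReal.ofReal (t ^ (2*θ)) * (‖h t‖₊ : ℝ≥0∞) ^ 2) := by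
          refine lintegral_mono_ae ((ae_restrict_iff' measurableSet_Ici).2 (ae_of_all _ ?_))
          intro t ht
          rw [← mul_assoc, ← ENNReal.ofReal_mul (by positivity)]
          refine le_mul_of_one_le_left zero_le (ENNReal.one_le_ofReal.2 ?_)
          have h1 : r ^ (2*θ) ≤ t ^ (2*θ) := Real.rpow_le_rpow hr.le ht hθ2.le
          have h2 : 0 < r ^ (2*θ) := Real.rpow_pos_of_pos hr _
          rw [Real.rpow_neg hr.le, inv_mul_eq_div, le_div_iff₀ h2]
          linarith
      _ = ENNReal.ofReal (r ^ (-(2*θ))) *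
            ∫⁻ t in Set.Ici r, ENNReal.ofReal (t ^ (2*θ)) * (‖h t‖₊ : ℝ≥0∞) ^ 2 :=
          lintegral_const_mul' _ _ ENNReal.ofReal_ne_top
      _ ≤ ENNReal.ofReal (r ^ (-(2*θ))) * IB := by
          gcongr
          rw [hIBdef]
          unfold μplus
          exact lintegral_mono_set (Set.Ici_subset_Ici.2 hr.le)
  -- splitting
  have split : ∀ r : ℝ, 0 < r → N =
      (∫⁻ t in Set.Ico (0:ℝ) r, (‖h t‖₊ : ℝ≥0∞) ^ 2) +
        ∫⁻ t in Set.Ici r, (‖h t‖₊ : ℝ≥0∞) ^ 2 := by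
    intro r hr
    have hdisj : Disjoint (Set.Ico (0:ℝ) r) (Set.Ici r) :=
      Set.disjoint_left.mpr fun x hx hx' => absurd hx.2 (not_lt.mpr hx')
    rw [hnorm]
    unfold μplus
    rw [← Set.Ico_union_Ici_eq_Ici hr.le, lintegral_union measurableSet_Ici hdisj]
  -- key inequality
  have key : ∀ s : ℝ, 0 < s → N ≤ ENNReal.ofReal (K^2 * s * a + s⁻¹ * b) := by
    intro s hs
    set r := s ^ (1/(2*θ)) with hrdef
    have hrpos : 0 < r := Real.rpow_pos_of_pos hs _
    have hr2θ : r ^ (2*θ) = s := by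
      rw [hrdef, ← Real.rpow_mul hs.le, one_div, inv_mul_cancel₀ (ne_of_gt hθ2), Real.rpow_one]
    have hrneg : r ^ (-(2*θ)) = s⁻¹ := by rw [Real.rpow_neg hrpos.le, hr2θ]
    calc N = (∫⁻ t in Set.Ico (0:ℝ) r, (‖h t‖₊ : ℝ≥0∞) ^ 2) +
            ∫⁻ t in Set.Ici r, (‖h t‖₊ : ℝ≥0∞) ^ 2 := split r hrpos
      _ ≤ ENNReal.ofReal (K^2 * r ^ (2*θ)) * IA + ENNReal.ofReal (r ^ (-(2*θ))) * IB :=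
          add_le_add (hyp r hrpos) (tail r hrpos)
      _ = ENNReal.ofReal (K^2 * s * a + s⁻¹ * b) := by
          rw [hr2θ, hrneg, hIAa, hIBb, ← ENNReal.ofReal_mul (by positivity),
            ← ENNReal.ofReal_mul (by positivity),
            ← ENNReal.ofReal_add (by positivity) (by positivity)]
  have hNtop : N ≠ ∞ := (lt_of_le_of_lt (key 1 one_pos) ENNReal.ofReal_lt_top).ne
  have keyR : ∀ s : ℝ, 0 < s → N.toReal ≤ K^2 * s * a + s⁻¹ * b := fun s hs =>
    ENNReal.toReal_le_of_le_ofReal (by positivity) (key s hs)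
  rcases eq_or_lt_of_le ha0 with ha | ha
  · -- a = 0 : N = 0
    have hN0 : N = 0 := by
      have : N.toReal ≤ 0 := by
        refine auxnonpos _ b fun s hs => ?_
        have := keyR s⁻¹ (by positivity)
        rw [← ha, inv_inv] at this
        linarith
      have h2 := ENNReal.toReal_nonneg (a := N)
      exact (ENNReal.toReal_eq_zero_iff N).1 (le_antisymm ‹N.toReal ≤ 0› h2) |>.resolve_right hNtop
    rw [hN0]; exact zero_le
  rcases eq_or_lt_of_le hb0 with hb | hb
  · -- b = 0 : N = 0
    have hN0 : N = 0 := by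
      have : N.toReal ≤ 0 := by
        refine auxnonpos _ (K^2 * a) fun s hs => ?_
        have := keyR s hs
        rw [← hb] at this
        linarith [this]
      have h2 := ENNReal.toReal_nonneg (a := N)
      exact (ENNReal.toReal_eq_zero_iff N).1 (le_antisymm this h2) |>.resolve_right hNtop
    rw [hN0]; exact zero_le
  -- main case
  have h3 : 0 < Real.sqrt a := Real.sqrt_pos.2 ha
  have h4 : 0 < Real.sqrt b := Real.sqrt_pos.2 hb
  have h1 : Real.sqrt a ^ 2 = a := Real.sq_sqrt ha.le
  have h2 : Real.sqrt b ^ 2 = b := Real.sq_sqrt hb.le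
  set s := Real.sqrt b / (K * Real.sqrt a) with hsdef
  have hs : 0 < s := by positivity
  have hcalc : K^2 * s * a + s⁻¹ * b = 2 * K * (Real.sqrt a * Real.sqrt b) := by
    rw [hsdef]
    field_simp
    linear_combination (-Real.sqrt b^2) * h1 - Real.sqrt a^2 * h2
  calc N ≤ ENNReal.ofReal (K^2 * s * a + s⁻¹ * b) := key s hs
    _ = ENNReal.ofReal (2*K) * IA ^ ((1:ℝ)/2) * IB ^ ((1:ℝ)/2) := by
        rw [hcalc, hIAa, hIBb,
          ENNReal.ofReal_rpow_of_nonneg ha0 (by norm_num : (0:ℝ) ≤ 1/2),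
          ENNReal.ofReal_rpow_of_nonneg hb0 (by norm_num : (0:ℝ) ≤ 1/2),
          Real.sqrt_eq_rpow a, Real.sqrt_eq_rpow b,
          ← ENNReal.ofReal_mul (by positivity), ← ENNReal.ofReal_mul (by positivity)]
        ring_nf
end
end

section
/- Let n ∈ ℕ, b₀, …, b_{2ⁿ−1} ∈ ℝ, and f(x) := ∑_{k=0}^{2ⁿ−1} b_k χ_{[k 2^{-n}, (k+1) 2^{-n})}(x). Then for every k₀ ∈ {0, …, 2ⁿ−1} and every x̃ ∈ [k₀ 2^{-n}, (k₀+1) 2^{-n}), one has ∫_{ℝ₊} (x ⊕ x̃)² |f(x)|² dx = 2^{-3n} ∑_{k=0}^{2ⁿ−1} b_{k XOR k₀}² · (3k² + 3k + 1)/3, where k XOR k₀ denotes bitwise XOR of natural numbers. -/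
open MeasureTheory Set Filter
open scoped ENNReal NNReal

set_option maxHeartbeats 1000000

noncomputable section

section Aux
open Function


lemma dDigit_le_one (x : ℝ) (j : ℤ) : dDigit x j ≤ 1 :=
  Nat.lt_succ_iff.mp (Nat.mod_lt _ (by norm_num))

lemma dDigit_eq_zero {x : ℝ} {j : ℤ} (h : x * 2 ^ (j + 1) < 1) : dDigit x j = 0 := by
  unfold dDigit
  have : ⌊x * 2 ^ (j + 1)⌋ < 1 := Int.floor_lt.2 (by exact_mod_cast h)
  rw [Int.toNat_of_nonpos (by omega)]

lemma bits_sum (N : ℕ) : ∀ a : ℕ, a < 2 ^ N → ∑ j ∈ Finset.range N, (a >>> j) % 2 * 2 ^ j = a := by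
  induction N with
  | zero => intro a ha; simpa using by omega
  | succ N ih =>
    intro a ha
    rw [Finset.sum_range_succ']
    have h1 : ∀ j, a >>> (j + 1) = (a / 2) >>> j := by
      intro j; simp [Nat.shiftRight_eq_div_pow, Nat.div_div_eq_div_mul, pow_succ']
    have h2 : ∑ j ∈ Finset.range N, (a >>> (j+1)) % 2 * 2 ^ (j+1)
        = 2 * ∑ j ∈ Finset.range N, ((a/2) >>> j) % 2 * 2 ^ j := by
      rw [Finset.mul_sum]; apply Finset.sum_congr rfl; intro j _; rw [h1]; ring
    have h3 : a / 2 < 2 ^ N := by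
      rw [Nat.div_lt_iff_lt_mul (by norm_num)]; rw [pow_succ] at ha; omega
    rw [h2, ih _ h3]
    simp [Nat.shiftRight_zero]
    omega

lemma mod2_eq_testBit (a j : ℕ) : (a >>> j) % 2 = (a.testBit j).toNat := by
  rw [Nat.testBit_eq_decide_div_mod_eq, Nat.shiftRight_eq_div_pow]
  rcases Nat.mod_two_eq_zero_or_one (a / 2 ^ j) with h | h <;> simp [h]

lemma xor_bit (c t j : ℕ) :
    (((c ^^^ t) >>> j % 2 : ℕ) : ℝ) = |((c >>> j % 2 : ℕ) : ℝ) - ((t >>> j % 2 : ℕ) : ℝ)| := by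
  rw [mod2_eq_testBit, mod2_eq_testBit, mod2_eq_testBit, Nat.testBit_xor]
  rcases Bool.dichotomy (c.testBit j) with h | h <;> rcases Bool.dichotomy (t.testBit j) with h' | h' <;>
    simp [h, h'] <;> norm_num

lemma head_sum (N a : ℕ) (h : a < 2 ^ N) :
    ∑ i ∈ Finset.range N, ((a >>> (N - 1 - i) % 2 : ℕ) : ℝ) * 2 ^ (-(i:ℤ) - 1)
      = (a : ℝ) * 2 ^ (-(N:ℤ)) := by
  have hb : ∑ i ∈ Finset.range N, (a >>> (N - 1 - i)) % 2 * 2 ^ (N - 1 - i) = a := by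
    rw [Finset.sum_range_reflect (fun j => (a >>> j) % 2 * 2 ^ j) N]
    exact bits_sum N a h
  have := congrArg (fun m : ℕ => (m : ℝ) * 2 ^ (-(N:ℤ))) hb
  simp only [Nat.cast_sum, Finset.sum_mul, Nat.cast_mul, Nat.cast_pow, Nat.cast_ofNat] at this
  rw [← this]
  apply Finset.sum_congr rfl
  intro i hi
  have hiN : i < N := Finset.mem_range.mp hi
  have : ((2:ℝ) ^ (N - 1 - i) : ℝ) * 2 ^ (-(N:ℤ)) = 2 ^ (-(i:ℤ) - 1) := by
    rw [← zpow_natCast (2:ℝ) (N - 1 - i), ← zpow_add₀ (by norm_num : (2:ℝ) ≠ 0)]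
    congr 1
    have : ((N - 1 - i : ℕ) : ℤ) = (N : ℤ) - 1 - i := by omega
    omega
  rw [mul_assoc, this]

lemma abs_digit_le_one (x y : ℝ) (j : ℤ) : |(dDigit x j : ℝ) - (dDigit y j : ℝ)| ≤ 1 := by
  have h1 := dDigit_le_one x j; have h2 := dDigit_le_one y j
  rw [abs_le]
  constructor <;> [skip; skip] <;>
    · have : (dDigit x j : ℝ) ≤ 1 := by exact_mod_cast h1
      have : (dDigit y j : ℝ) ≤ 1 := by exact_mod_cast h2
      have : (0:ℝ) ≤ dDigit x j := Nat.cast_nonneg _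
      have : (0:ℝ) ≤ dDigit y j := Nat.cast_nonneg _
      linarith

lemma geom_term (i : ℕ) : (2:ℝ) ^ (-(i:ℤ) - 1) = (1/2) ^ (i+1) := by
  rw [show (-(i:ℤ) - 1) = -((i+1 : ℕ) : ℤ) by push_cast; ring, zpow_neg, zpow_natCast]
  rw [one_div, inv_pow]

lemma summable_geom : Summable (fun i : ℕ => (2:ℝ) ^ (-(i:ℤ) - 1)) := by
  simp_rw [geom_term]
  exact (summable_geometric_two.mul_right (1/2)).congr (fun i => by rw [pow_succ])

lemma summable_digit (x y : ℝ) :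
    Summable (fun i : ℕ => |(dDigit x i : ℝ) - (dDigit y i : ℝ)| * 2 ^ (-(i:ℤ) - 1)) := by
  apply Summable.of_nonneg_of_le (fun i => by positivity) (fun i => ?_) summable_geom
  calc |(dDigit x i : ℝ) - (dDigit y i : ℝ)| * 2 ^ (-(i:ℤ) - 1)
      ≤ 1 * 2 ^ (-(i:ℤ) - 1) := by
        apply mul_le_mul_of_nonneg_right (abs_digit_le_one x y i) (by positivity)
    _ = 2 ^ (-(i:ℤ) - 1) := one_mul _

lemma tail_geom (N : ℕ) : ∑' i : ℕ, (2:ℝ) ^ (-((i + N : ℕ):ℤ) - 1) = 2 ^ (-(N:ℤ)) := by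
  have : ∀ i : ℕ, (2:ℝ) ^ (-((i + N : ℕ):ℤ) - 1) = (2:ℝ)^(-(N:ℤ)) / 2 / 2^i := by
    intro i
    rw [show (-((i + N : ℕ):ℤ) - 1) = (-(N:ℤ)) + (-(i:ℤ) - 1) by push_cast; ring,
      zpow_add₀ (by norm_num : (2:ℝ) ≠ 0)]
    rw [show (-(i:ℤ) - 1) = (-(i:ℤ)) + (-1 : ℤ) by ring, zpow_add₀ (by norm_num : (2:ℝ) ≠ 0)]
    rw [zpow_neg, zpow_natCast]
    norm_num
    ring
  simp_rw [this]
  exact tsum_geometric_two' _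

lemma dSum_eq_nat {x y : ℝ} (hx : 0 ≤ x) (hx1 : x < 1) (hy : 0 ≤ y) (hy1 : y < 1) :
    dSum x y = ∑' i : ℕ, |(dDigit x i : ℝ) - (dDigit y i : ℝ)| * 2 ^ (-(i:ℤ) - 1) := by
  unfold dSum
  have hinj : Function.Injective (fun i : ℕ => (i : ℤ)) := Nat.cast_injective
  have hsupp : Function.support (fun j : ℤ => |(dDigit x j : ℝ) - (dDigit y j : ℝ)| * 2 ^ (-j - 1))
      ⊆ Set.range (fun i : ℕ => (i : ℤ)) := by
    intro j hj
    rw [Function.mem_support] at hj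
    by_contra hr
    apply hj
    have hjneg : j < 0 := by
      by_contra h
      exact hr ⟨j.toNat, by simp; omega⟩
    have hz : ∀ z : ℝ, 0 ≤ z → z < 1 → dDigit z j = 0 := by
      intro z hz0 hz1
      apply dDigit_eq_zero
      have h2 : (2:ℝ) ^ (j+1) ≤ 1 := zpow_le_one_of_nonpos₀ (by norm_num) (by omega)
      have h2' : (0:ℝ) < 2 ^ (j+1) := by positivity
      nlinarith
    rw [hz x hx hx1, hz y hy hy1]
    simp
  rw [← hinj.tsum_eq hsupp]

lemma dDigit_of_mem {N c : ℕ} {x : ℝ} (h1 : (c:ℝ) * 2 ^ (-(N:ℤ)) ≤ x)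
    (h2 : x < ((c:ℝ)+1) * 2 ^ (-(N:ℤ))) {i : ℕ} (hi : i < N) :
    dDigit x i = c >>> (N - 1 - i) % 2 := by
  set M := N - 1 - i with hM
  set q := c >>> M with hq
  have hqd : q = c / 2 ^ M := Nat.shiftRight_eq_div_pow c M
  have hq1 : q * 2 ^ M ≤ c := by rw [hqd]; exact Nat.div_mul_le_self _ _
  have hq2 : c + 1 ≤ (q + 1) * 2 ^ M := by
    rw [hqd]
    have h := Nat.div_add_mod c (2 ^ M)
    have h2 : c % 2 ^ M < 2 ^ M := Nat.mod_lt _ (by positivity)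
    calc c + 1 = 2 ^ M * (c / 2 ^ M) + c % 2 ^ M + 1 := by omega
      _ ≤ 2 ^ M * (c / 2 ^ M) + 2 ^ M := by omega
      _ = (c / 2 ^ M + 1) * 2 ^ M := by ring
  have hNpos : (0:ℝ) < 2 ^ (N:ℤ) := by positivity
  have hMpos : (0:ℝ) < 2 ^ (M:ℕ) := by positivity
  have hxN1 : (c:ℝ) ≤ x * 2 ^ (N:ℤ) := by
    have := mul_le_mul_of_nonneg_right h1 hNpos.le
    rwa [mul_assoc, zpow_neg, inv_mul_cancel₀ hNpos.ne', mul_one] at this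
  have hxN2 : x * 2 ^ (N:ℤ) < (c:ℝ) + 1 := by
    have := mul_lt_mul_of_pos_right h2 hNpos
    rwa [mul_assoc, zpow_neg, inv_mul_cancel₀ hNpos.ne', mul_one] at this
  have key : x * 2 ^ ((i:ℤ) + 1) * 2 ^ (M:ℕ) = x * 2 ^ (N:ℤ) := by
    rw [mul_assoc, ← zpow_natCast (2:ℝ) M, ← zpow_add₀ (by norm_num : (2:ℝ) ≠ 0)]
    congr 2
    omega
  have hfloor : ⌊x * 2 ^ ((i:ℤ) + 1)⌋ = (q : ℤ) := by
    rw [Int.floor_eq_iff]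
    constructor
    · have hc1 : ((q * 2 ^ M : ℕ) : ℝ) ≤ (c:ℝ) := by exact_mod_cast hq1
      push_cast at hc1
      rw [show (((q:ℤ)):ℝ) = (q:ℝ) by push_cast; ring]
      rw [show ((q:ℝ)) = (q:ℝ) * 2 ^ (M:ℕ) / 2 ^ (M:ℕ) by field_simp]
      rw [div_le_iff₀ hMpos, key]
      linarith
    · have hc2 : ((c:ℝ) + 1) ≤ ((q:ℝ) + 1) * 2 ^ (M:ℕ) := by exact_mod_cast hq2
      push_cast at hc2 ⊢
      rw [show ((q:ℝ) + 1) = ((q:ℝ) + 1) * 2 ^ (M:ℕ) / 2 ^ (M:ℕ) by field_simp]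
      rw [lt_div_iff₀ hMpos, key]
      linarith
  unfold dDigit
  rw [hfloor]
  simp

lemma lt_one_of_mem {N c : ℕ} {x : ℝ} (hc : c < 2 ^ N)
    (h2 : x < ((c:ℝ)+1) * 2 ^ (-(N:ℤ))) : x < 1 := by
  have h1 : ((c:ℝ) + 1) ≤ 2 ^ (N:ℕ) := by exact_mod_cast hc
  have hpos : (0:ℝ) < 2 ^ (-(N:ℤ)) := by positivity
  have key : (2:ℝ) ^ (N:ℕ) * 2 ^ (-(N:ℤ)) = 1 := by
    rw [← zpow_natCast (2:ℝ) N, ← zpow_add₀ (by norm_num : (2:ℝ) ≠ 0)]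
    simp
  nlinarith

lemma dSum_bounds (N c t : ℕ) (hc : c < 2 ^ N) (ht : t < 2 ^ N) {x y : ℝ}
    (hx1 : (c:ℝ) * 2 ^ (-(N:ℤ)) ≤ x) (hx2 : x < ((c:ℝ)+1) * 2 ^ (-(N:ℤ)))
    (hy1 : (t:ℝ) * 2 ^ (-(N:ℤ)) ≤ y) (hy2 : y < ((t:ℝ)+1) * 2 ^ (-(N:ℤ))) :
    ((c ^^^ t : ℕ):ℝ) * 2 ^ (-(N:ℤ)) ≤ dSum x y ∧
      dSum x y ≤ ((c ^^^ t : ℕ):ℝ) * 2 ^ (-(N:ℤ)) + 2 ^ (-(N:ℤ)) := by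
  have hx0 : 0 ≤ x := le_trans (by positivity) hx1
  have hy0 : 0 ≤ y := le_trans (by positivity) hy1
  have hx1' : x < 1 := lt_one_of_mem hc hx2
  have hy1' : y < 1 := lt_one_of_mem ht hy2
  have hsplit := Summable.sum_add_tsum_nat_add N (summable_digit x y)
  rw [dSum_eq_nat hx0 hx1' hy0 hy1', ← hsplit]
  have hhead : ∑ i ∈ Finset.range N, |(dDigit x i : ℝ) - (dDigit y i : ℝ)| * 2 ^ (-(i:ℤ) - 1)
      = ((c ^^^ t : ℕ):ℝ) * 2 ^ (-(N:ℤ)) := by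
    rw [← head_sum N (c ^^^ t) (Nat.xor_lt_two_pow hc ht)]
    apply Finset.sum_congr rfl
    intro i hi
    rw [dDigit_of_mem hx1 hx2 (Finset.mem_range.mp hi),
      dDigit_of_mem hy1 hy2 (Finset.mem_range.mp hi), xor_bit]
  have htail1 : 0 ≤ ∑' i : ℕ, |(dDigit x (i+N) : ℝ) - (dDigit y (i+N) : ℝ)| * 2 ^ (-((i+N:ℕ):ℤ) - 1) :=
    tsum_nonneg (fun i => by positivity)
  have htail2 : ∑' i : ℕ, |(dDigit x (i+N) : ℝ) - (dDigit y (i+N) : ℝ)| * 2 ^ (-((i+N:ℕ):ℤ) - 1)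
      ≤ 2 ^ (-(N:ℤ)) := by
    have hs1 : Summable (fun i : ℕ =>
        |(dDigit x (i+N) : ℝ) - (dDigit y (i+N) : ℝ)| * 2 ^ (-((i+N:ℕ):ℤ) - 1)) :=
      (summable_digit x y).comp_injective (add_left_injective N)
    have hs2 : Summable (fun i : ℕ => (2:ℝ) ^ (-((i+N:ℕ):ℤ) - 1)) :=
      summable_geom.comp_injective (add_left_injective N)
    rw [← tail_geom N]
    refine Summable.tsum_le_tsum (fun i => ?_) hs1 hs2
    calc |(dDigit x (i+N) : ℝ) - (dDigit y (i+N) : ℝ)| * 2 ^ (-((i+N:ℕ):ℤ) - 1)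
        ≤ 1 * 2 ^ (-((i+N:ℕ):ℤ) - 1) :=
          mul_le_mul_of_nonneg_right (abs_digit_le_one x y _) (by positivity)
      _ = 2 ^ (-((i+N:ℕ):ℤ) - 1) := one_mul _
  constructor
  · push_cast at hhead ⊢
    rw [hhead]; push_cast at htail1 ⊢; linarith
  · push_cast at hhead ⊢
    rw [hhead]; push_cast at htail2 ⊢; linarith

lemma summable_digit_int (x y : ℝ) :
    Summable (fun j : ℤ => |(dDigit x j : ℝ) - (dDigit y j : ℝ)| * 2 ^ (-j - 1)) := by
  obtain ⟨B, hB⟩ := pow_unbounded_of_one_lt (max x y) (by norm_num : (1:ℝ) < 2)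
  have hxB : x < 2 ^ B := lt_of_le_of_lt (le_max_left _ _) hB
  have hyB : y < 2 ^ B := lt_of_le_of_lt (le_max_right _ _) hB
  have hinj : Function.Injective (fun i : ℕ => (i:ℤ) - B) := by
    intro a b h; simp at h; exact_mod_cast h
  have hvanish : ∀ z : ℝ, z < 2 ^ B → ∀ j : ℤ, j < -(B:ℤ) → dDigit z j = 0 := by
    intro z hz j hj
    apply dDigit_eq_zero
    have h2 : (2:ℝ) ^ (j+1) ≤ ((2:ℝ) ^ (B:ℕ))⁻¹ := by
      rw [← zpow_natCast (2:ℝ) B, ← zpow_neg]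
      exact zpow_le_zpow_right₀ (by norm_num) (by omega)
    have h2' : (0:ℝ) < 2 ^ (j+1) := by positivity
    have h3 : (0:ℝ) < ((2:ℝ) ^ (B:ℕ))⁻¹ := by positivity
    rcases le_or_gt z 0 with hz0 | hz0
    · nlinarith
    · calc z * 2 ^ (j+1) ≤ z * ((2:ℝ) ^ (B:ℕ))⁻¹ := by nlinarith
        _ < 2 ^ B * ((2:ℝ) ^ (B:ℕ))⁻¹ := by apply mul_lt_mul_of_pos_right hz h3
        _ = 1 := by field_simp
  have hzero : ∀ j ∉ Set.range (fun i : ℕ => (i:ℤ) - B),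
      |(dDigit x j : ℝ) - (dDigit y j : ℝ)| * 2 ^ (-j - 1) = 0 := by
    intro j hr
    have hjlt : j < -(B:ℤ) := by
      by_contra h
      exact hr ⟨(j + B).toNat, by simp; omega⟩
    rw [hvanish x hxB j hjlt, hvanish y hyB j hjlt]
    simp
  have hS : Summable (fun i : ℕ =>
      |(dDigit x ((i:ℤ) - B) : ℝ) - (dDigit y ((i:ℤ) - B) : ℝ)| * 2 ^ (-((i:ℤ) - B) - 1)) := by
    apply Summable.of_nonneg_of_le (fun i => by positivity)
      (fun i => ?_) (summable_geom.mul_left ((2:ℝ) ^ (B:ℕ)))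
    calc |(dDigit x ((i:ℤ) - B) : ℝ) - (dDigit y ((i:ℤ) - B) : ℝ)| * 2 ^ (-((i:ℤ) - B) - 1)
        ≤ 1 * 2 ^ (-((i:ℤ) - B) - 1) :=
          mul_le_mul_of_nonneg_right (abs_digit_le_one x y _) (by positivity)
      _ = 2 ^ (B:ℕ) * 2 ^ (-(i:ℤ) - 1) := by
          rw [one_mul, ← zpow_natCast (2:ℝ) B, ← zpow_add₀ (by norm_num : (2:ℝ) ≠ 0)]
          congr 1; ring
  exact (hinj.summable_iff hzero).mp hS

lemma measurable_digit (j : ℤ) : Measurable (fun x : ℝ => (dDigit x j : ℝ)) := by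
  have h1 : Measurable fun x : ℝ => ⌊x * 2 ^ (j+1)⌋ :=
    Int.measurable_floor.comp (measurable_id.mul_const _)
  exact (measurable_from_top (f := fun z : ℤ => ((z.toNat % 2 : ℕ) : ℝ))).comp h1

lemma measurable_dSum (y : ℝ) : Measurable (fun x => dSum x y) := by
  have hterm : ∀ j : ℤ,
      Measurable (fun x : ℝ => |(dDigit x j : ℝ) - (dDigit y j : ℝ)| * 2 ^ (-j - 1)) :=
    fun j => (((measurable_digit j).sub measurable_const).abs).mul_const _
  have heq : (fun x => dSum x y) = fun x =>
      (∑' j : ℤ, ENNReal.ofReal (|(dDigit x j : ℝ) - (dDigit y j : ℝ)| * 2 ^ (-j - 1))).toReal := by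
    funext x
    rw [← ENNReal.ofReal_tsum_of_nonneg (fun j => by positivity) (summable_digit_int x y),
      ENNReal.toReal_ofReal (tsum_nonneg (fun j => by positivity))]
    rfl
  rw [heq]
  exact (Measurable.ennreal_tsum (fun j => (hterm j).ennreal_ofReal)).ennreal_toReal

lemma shiftRight_xor (a b i : ℕ) : (a ^^^ b) >>> i = (a >>> i) ^^^ (b >>> i) :=
  Nat.eq_of_testBit_eq fun j => by
    simp [Nat.testBit_shiftRight, Nat.testBit_xor]

lemma shiftRight_bounds {c i k : ℕ} (h : c >>> i = k) :
    k * 2 ^ i ≤ c ∧ c < (k+1) * 2 ^ i := by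
  rw [Nat.shiftRight_eq_div_pow] at h
  subst h
  have h1 := Nat.div_add_mod c (2 ^ i)
  have h2 : c % 2 ^ i < 2 ^ i := Nat.mod_lt _ (by positivity)
  constructor
  · calc c / 2 ^ i * 2 ^ i = 2 ^ i * (c / 2 ^ i) := by ring
      _ ≤ 2 ^ i * (c / 2 ^ i) + c % 2 ^ i := Nat.le_add_right _ _
      _ = c := h1
  · calc c = 2 ^ i * (c / 2 ^ i) + c % 2 ^ i := h1.symm
      _ < 2 ^ i * (c / 2 ^ i) + 2 ^ i := by omega
      _ = (c / 2 ^ i + 1) * 2 ^ i := by ring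

lemma shiftRight_eq_of_bounds {c i k : ℕ} (h1 : k * 2 ^ i ≤ c) (h2 : c < (k+1) * 2 ^ i) :
    c >>> i = k := by
  rw [Nat.shiftRight_eq_div_pow]
  exact Nat.div_eq_of_lt_le h1 h2

lemma tp_pos (N : ℕ) : (0:ℝ) < 2 ^ (-(N:ℤ)) := by positivity

lemma tp_mul (n N : ℕ) (hn : n ≤ N) :
    ((2:ℝ) ^ ((N - n : ℕ))) * 2 ^ (-(N:ℤ)) = 2 ^ (-(n:ℤ)) := by
  rw [← zpow_natCast (2:ℝ) (N - n), ← zpow_add₀ (by norm_num : (2:ℝ) ≠ 0)]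
  congr 1
  omega

lemma tp_cancel (N : ℕ) : ((2:ℝ) ^ (N:ℤ)) * 2 ^ (-(N:ℤ)) = 1 := by
  rw [← zpow_add₀ (by norm_num : (2:ℝ) ≠ 0)]
  simp

lemma dyadic_I_subset {N n k c : ℕ} (hn : n ≤ N) (hck : c >>> (N - n) = k) :
    Ico ((c:ℝ) * 2 ^ (-(N:ℤ))) (((c:ℝ)+1) * 2 ^ (-(N:ℤ)))
      ⊆ Ico ((k:ℝ) * 2 ^ (-(n:ℤ))) (((k:ℝ)+1) * 2 ^ (-(n:ℤ))) := by
  obtain ⟨hb1, hb2⟩ := shiftRight_bounds hck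
  have e := tp_mul n N hn
  have hN := tp_pos N
  apply Set.Ico_subset_Ico
  · have : ((k * 2 ^ (N - n) : ℕ):ℝ) ≤ (c:ℝ) := by exact_mod_cast hb1
    push_cast at this
    calc (k:ℝ) * 2 ^ (-(n:ℤ)) = (k:ℝ) * (2 ^ ((N - n : ℕ)) * 2 ^ (-(N:ℤ))) := by rw [e]
      _ = ((k:ℝ) * 2 ^ ((N - n : ℕ))) * 2 ^ (-(N:ℤ)) := by ring
      _ ≤ (c:ℝ) * 2 ^ (-(N:ℤ)) := by nlinarith
  · have : ((c:ℝ)+1) ≤ ((k:ℝ)+1) * 2 ^ ((N - n : ℕ)) := by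
      have : (c + 1 : ℕ) ≤ (k+1) * 2 ^ (N - n) := hb2
      exact_mod_cast this
    calc ((c:ℝ)+1) * 2 ^ (-(N:ℤ)) ≤ ((k:ℝ)+1) * 2 ^ ((N - n : ℕ)) * 2 ^ (-(N:ℤ)) := by nlinarith
      _ = ((k:ℝ)+1) * 2 ^ (-(n:ℤ)) := by rw [mul_assoc, e]

lemma floor_level {n k N : ℕ} (hn : n ≤ N) (hk : k < 2 ^ n) {x : ℝ}
    (h1 : (k:ℝ) * 2 ^ (-(n:ℤ)) ≤ x) (h2 : x < ((k:ℝ)+1) * 2 ^ (-(n:ℤ))) :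
    ((((⌊x * 2 ^ (N:ℤ)⌋).toNat : ℝ) * 2 ^ (-(N:ℤ)) ≤ x ∧
      x < (((⌊x * 2 ^ (N:ℤ)⌋).toNat : ℝ)+1) * 2 ^ (-(N:ℤ))) ∧
      (⌊x * 2 ^ (N:ℤ)⌋).toNat < 2 ^ N ∧ (⌊x * 2 ^ (N:ℤ)⌋).toNat >>> (N - n) = k) := by
  have hx0 : 0 ≤ x := le_trans (by positivity) h1
  have hx1 : x < 1 := lt_one_of_mem hk h2
  have hNpos : (0:ℝ) < 2 ^ (N:ℤ) := by positivity
  have hfl0 : 0 ≤ ⌊x * 2 ^ (N:ℤ)⌋ := Int.floor_nonneg.2 (by positivity)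
  set c := (⌊x * 2 ^ (N:ℤ)⌋).toNat with hc
  have hcast : ((c:ℝ)) = (⌊x * 2 ^ (N:ℤ)⌋ : ℝ) := by
    rw [hc]; exact_mod_cast congrArg (fun z : ℤ => (z:ℝ)) (Int.toNat_of_nonneg hfl0)
  have hfl1 : (c:ℝ) ≤ x * 2 ^ (N:ℤ) := hcast ▸ Int.floor_le _
  have hfl2 : x * 2 ^ (N:ℤ) < (c:ℝ) + 1 := by
    rw [hcast]; exact Int.lt_floor_add_one _
  have hinv : x = (x * 2 ^ (N:ℤ)) * 2 ^ (-(N:ℤ)) := by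
    rw [mul_assoc, tp_cancel, mul_one]
  have htp := tp_pos N
  refine ⟨⟨?_, ?_⟩, ?_, ?_⟩
  · rw [hinv]; nlinarith
  · rw [hinv]; nlinarith
  · have : x * 2 ^ (N:ℤ) < 2 ^ (N:ℤ) := by nlinarith
    have h2N : ((2:ℝ) ^ (N:ℕ)) = 2 ^ (N:ℤ) := by rw [← zpow_natCast]
    have : (c:ℝ) < (2 ^ N : ℕ) := by push_cast; rw [h2N]; linarith
    exact_mod_cast this
  · have e := tp_mul n N hn
    have hb1 : (k * 2 ^ (N - n) : ℕ) ≤ c := by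
      have : ((k * 2 ^ (N - n) : ℕ) : ℝ) ≤ x * 2 ^ (N:ℤ) := by
        push_cast
        have : (k:ℝ) * 2 ^ ((N-n:ℕ)) * 2 ^ (-(N:ℤ)) = (k:ℝ) * 2 ^ (-(n:ℤ)) := by
          rw [mul_assoc, e]
        nlinarith [mul_le_mul_of_nonneg_right h1 hNpos.le,
          tp_cancel N, mul_pos (tp_pos N) hNpos]
      -- (k*2^(N-n) : ℝ) ≤ x * 2^N and c = floor.toNat
      have h' : ((k * 2 ^ (N - n) : ℕ) : ℤ) ≤ ⌊x * 2 ^ (N:ℤ)⌋ := Int.le_floor.2 (by exact_mod_cast this)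
      omega
    have hb2 : c < ((k+1) * 2 ^ (N - n) : ℕ) := by
      have hr : x * 2 ^ (N:ℤ) < (((k+1) * 2 ^ (N - n) : ℕ) : ℝ) := by
        push_cast
        have he : ((k:ℝ)+1) * 2 ^ ((N-n:ℕ)) * 2 ^ (-(N:ℤ)) = ((k:ℝ)+1) * 2 ^ (-(n:ℤ)) := by
          rw [mul_assoc, e]
        nlinarith [mul_lt_mul_of_pos_right h2 hNpos, tp_cancel N]
      have : (c:ℝ) < (((k+1) * 2 ^ (N - n) : ℕ) : ℝ) := lt_of_le_of_lt hfl1 hr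
      exact_mod_cast this
    exact shiftRight_eq_of_bounds hb1 hb2

lemma Ico_dyadic_disjoint {N : ℕ} {c d : ℕ} (h : c ≠ d) :
    Disjoint (Ico ((c:ℝ) * 2 ^ (-(N:ℤ))) (((c:ℝ)+1) * 2 ^ (-(N:ℤ))))
      (Ico ((d:ℝ) * 2 ^ (-(N:ℤ))) (((d:ℝ)+1) * 2 ^ (-(N:ℤ)))) := by
  rw [Set.Ico_disjoint_Ico]
  have htp := tp_pos N
  rcases h.lt_or_gt with h | h
  · have : ((c:ℝ)+1) ≤ (d:ℝ) := by exact_mod_cast h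
    exact le_trans (min_le_left _ _) (le_trans (by nlinarith) (le_max_right _ _))
  · have : ((d:ℝ)+1) ≤ (c:ℝ) := by exact_mod_cast h
    exact le_trans (min_le_right _ _) (le_trans (by nlinarith) (le_max_left _ _))

lemma tp_eq_pow (N : ℕ) : (2:ℝ) ^ (-(N:ℤ)) = (1/2) ^ N := by
  rw [zpow_neg, zpow_natCast, one_div, inv_pow]



lemma vol_dyadic (N c : ℕ) :
    volume (Ico ((c:ℝ) * 2 ^ (-(N:ℤ))) (((c:ℝ)+1) * 2 ^ (-(N:ℤ))))
      = ENNReal.ofReal (2 ^ (-(N:ℤ))) := by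
  rw [Real.volume_Ico]
  congr 1
  ring

lemma card_smul_ofReal (q : ℕ) {r : ℝ} (hr : 0 ≤ r) :
    (q : ℝ≥0∞) * ENNReal.ofReal r = ENNReal.ofReal (q * r) := by
  rw [← ENNReal.ofReal_natCast q, ← ENNReal.ofReal_mul (Nat.cast_nonneg q)]

lemma pow_split (n N : ℕ) (hn : n ≤ N) : 2 ^ n * 2 ^ (N - n) = 2 ^ N := by
  rw [← pow_add]; congr 1; omega

lemma preimage_Iic_vol (n k₀ k : ℕ) (hk₀ : k₀ < 2 ^ n) (hk : k < 2 ^ n) {xt : ℝ}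
    (hxt1 : (k₀:ℝ) * 2 ^ (-(n:ℤ)) ≤ xt) (hxt2 : xt < ((k₀:ℝ)+1) * 2 ^ (-(n:ℤ))) (a : ℝ) :
    volume ((fun x => dSum x xt) ⁻¹' (Iic a) ∩
        Ico ((k:ℝ) * 2 ^ (-(n:ℤ))) (((k:ℝ)+1) * 2 ^ (-(n:ℤ))))
      = volume (Iic a ∩
        Ico (((k ^^^ k₀ : ℕ):ℝ) * 2 ^ (-(n:ℤ))) ((((k ^^^ k₀ : ℕ):ℝ)+1) * 2 ^ (-(n:ℤ)))) := by
  set m : ℕ := k ^^^ k₀ with hm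
  have hmlt : m < 2 ^ n := Nat.xor_lt_two_pow hk hk₀
  have htpn := tp_pos n
  have hΦmem : ∀ x ∈ Ico ((k:ℝ) * 2 ^ (-(n:ℤ))) (((k:ℝ)+1) * 2 ^ (-(n:ℤ))),
      (m:ℝ) * 2 ^ (-(n:ℤ)) ≤ dSum x xt ∧ dSum x xt ≤ (m:ℝ) * 2 ^ (-(n:ℤ)) + 2 ^ (-(n:ℤ)) :=
    fun x hx => dSum_bounds n k k₀ hk hk₀ hx.1 hx.2 hxt1 hxt2
  rcases lt_or_ge a ((m:ℝ) * 2 ^ (-(n:ℤ))) with hA | hA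
  · -- case a below the interval: both sides empty
    have h1 : (fun x => dSum x xt) ⁻¹' (Iic a) ∩
        Ico ((k:ℝ) * 2 ^ (-(n:ℤ))) (((k:ℝ)+1) * 2 ^ (-(n:ℤ))) = ∅ := by
      ext x; simp only [Set.mem_inter_iff, Set.mem_preimage, Set.mem_Iic, Set.mem_empty_iff_false,
        iff_false, not_and]
      intro hxa hxI
      exact absurd hxa (not_le.2 (lt_of_lt_of_le hA (hΦmem x hxI).1))
    have h2 : Iic a ∩
        Ico ((m:ℝ) * 2 ^ (-(n:ℤ))) (((m:ℝ)+1) * 2 ^ (-(n:ℤ))) = ∅ := by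
      ext x; simp only [Set.mem_inter_iff, Set.mem_Iic, Set.mem_Ico, Set.mem_empty_iff_false,
        iff_false, not_and]
      intro hxa hx1 hx2
      linarith
    rw [h1, h2]
  rcases le_or_gt (((m:ℝ)+1) * 2 ^ (-(n:ℤ))) a with hB | hB
  · -- case a above the interval: both sides full
    have h1 : (fun x => dSum x xt) ⁻¹' (Iic a) ∩
        Ico ((k:ℝ) * 2 ^ (-(n:ℤ))) (((k:ℝ)+1) * 2 ^ (-(n:ℤ)))
        = Ico ((k:ℝ) * 2 ^ (-(n:ℤ))) (((k:ℝ)+1) * 2 ^ (-(n:ℤ))) := by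
      apply Set.inter_eq_right.2
      intro x hx
      have := (hΦmem x hx).2
      simp only [Set.mem_preimage, Set.mem_Iic]
      nlinarith
    have h2 : Iic a ∩ Ico ((m:ℝ) * 2 ^ (-(n:ℤ))) (((m:ℝ)+1) * 2 ^ (-(n:ℤ)))
        = Ico ((m:ℝ) * 2 ^ (-(n:ℤ))) (((m:ℝ)+1) * 2 ^ (-(n:ℤ))) := by
      apply Set.inter_eq_right.2
      intro x hx
      simp only [Set.mem_Iic]
      have := hx.2
      linarith
    rw [h1, h2, vol_dyadic, vol_dyadic]
  · -- main case
    have hRHS : Iic a ∩ Ico ((m:ℝ) * 2 ^ (-(n:ℤ))) (((m:ℝ)+1) * 2 ^ (-(n:ℤ)))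
        = Icc ((m:ℝ) * 2 ^ (-(n:ℤ))) a := by
      ext x
      simp only [Set.mem_inter_iff, Set.mem_Iic, Set.mem_Ico, Set.mem_Icc]
      constructor
      · rintro ⟨h1, h2, h3⟩; exact ⟨h2, h1⟩
      · rintro ⟨h1, h2⟩; exact ⟨h2, h1, by linarith⟩
    set s : ℝ := a - (m:ℝ) * 2 ^ (-(n:ℤ)) with hs
    have hs0 : 0 ≤ s := by rw [hs]; linarith
    have hsn : s < 2 ^ (-(n:ℤ)) := by rw [hs]; nlinarith
    set V := volume ((fun x => dSum x xt) ⁻¹' (Iic a) ∩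
        Ico ((k:ℝ) * 2 ^ (-(n:ℤ))) (((k:ℝ)+1) * 2 ^ (-(n:ℤ)))) with hV
    have key : ∀ N : ℕ, n ≤ N →
        ENNReal.ofReal (s - 2 ^ (-(N:ℤ))) ≤ V ∧
          V ≤ ENNReal.ofReal (s + 2 * 2 ^ (-(N:ℤ))) := by
      intro N hnN
      have htpN := tp_pos N
      obtain ⟨⟨ht1, ht2⟩, htlt, htk₀⟩ := floor_level hnN hk₀ hxt1 hxt2 (N := N)
      set t : ℕ := (⌊xt * 2 ^ (N:ℤ)⌋).toNat with htdef
      have hNpos : (0:ℝ) < 2 ^ (N:ℤ) := by positivity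
      have ha0 : 0 ≤ a := le_trans (by positivity) hA
      have haN0 : 0 ≤ a * 2 ^ (N:ℤ) := by positivity
      set P : ℕ := (⌊a * 2 ^ (N:ℤ)⌋).toNat with hPdef
      have hPcast : ((P:ℝ)) = (⌊a * 2 ^ (N:ℤ)⌋ : ℝ) := by
        rw [hPdef]
        exact_mod_cast congrArg (fun z : ℤ => (z:ℝ)) (Int.toNat_of_nonneg (Int.floor_nonneg.2 haN0))
      have hP1 : (P:ℝ) ≤ a * 2 ^ (N:ℤ) := hPcast ▸ Int.floor_le _
      have hP2 : a * 2 ^ (N:ℤ) < (P:ℝ) + 1 := by rw [hPcast]; exact Int.lt_floor_add_one _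
      have hcan := tp_cancel N
      have htpm := tp_mul n N hnN
      have hmr : ((m * 2 ^ (N - n) : ℕ) : ℝ) ≤ a * 2 ^ (N:ℤ) := by
        push_cast
        have h1 : (m:ℝ) * 2 ^ (-(n:ℤ)) * 2 ^ (N:ℤ) ≤ a * 2 ^ (N:ℤ) :=
          mul_le_mul_of_nonneg_right hA hNpos.le
        nlinarith
      have hPge : m * 2 ^ (N - n) ≤ P := by
        have : ((m * 2 ^ (N - n) : ℕ) : ℤ) ≤ ⌊a * 2 ^ (N:ℤ)⌋ := Int.le_floor.2 (by exact_mod_cast hmr)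
        omega
      have hPlt : P < (m+1) * 2 ^ (N - n) := by
        have hr : a * 2 ^ (N:ℤ) < (((m+1) * 2 ^ (N - n) : ℕ) : ℝ) := by
          push_cast
          have h1 : a * 2 ^ (N:ℤ) < ((m:ℝ)+1) * 2 ^ (-(n:ℤ)) * 2 ^ (N:ℤ) :=
            mul_lt_mul_of_pos_right hB hNpos
          nlinarith
        have : (P:ℝ) < (((m+1) * 2 ^ (N - n) : ℕ) : ℝ) := lt_of_le_of_lt hP1 hr
        exact_mod_cast this
      have ha'facts : ∀ a' : ℕ, m * 2 ^ (N - n) ≤ a' → a' < (m+1) * 2 ^ (N - n) →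
          (a' ^^^ t) < 2 ^ N ∧ (a' ^^^ t) >>> (N - n) = k ∧ (a' ^^^ t) ^^^ t = a' := by
        intro a' h1 h2
        have ha'lt : a' < 2 ^ N := by
          have : (m+1) * 2 ^ (N - n) ≤ 2 ^ n * 2 ^ (N - n) :=
            Nat.mul_le_mul_right _ (by omega)
          rw [pow_split n N hnN] at this
          omega
        refine ⟨Nat.xor_lt_two_pow ha'lt htlt, ?_, xor_cancel_right _ _⟩
        rw [shiftRight_xor, shiftRight_eq_of_bounds h1 h2, htk₀, hm, xor_cancel_right]
      constructor
      · -- lower bound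
        set F := Finset.Ico (m * 2 ^ (N - n)) P with hF
        have hUsub : (⋃ a' ∈ F, Ico (((a' ^^^ t : ℕ):ℝ) * 2 ^ (-(N:ℤ)))
            ((((a' ^^^ t : ℕ):ℝ)+1) * 2 ^ (-(N:ℤ)))) ⊆
            (fun x => dSum x xt) ⁻¹' (Iic a) ∩
              Ico ((k:ℝ) * 2 ^ (-(n:ℤ))) (((k:ℝ)+1) * 2 ^ (-(n:ℤ))) := by
          intro x hx
          simp only [Set.mem_iUnion] at hx
          obtain ⟨a', ha'F, hxI⟩ := hx
          rw [hF, Finset.mem_Ico] at ha'F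
          obtain ⟨hfct1, hfct2, hfct3⟩ := ha'facts a' ha'F.1 (by omega)
          constructor
          · simp only [Set.mem_preimage, Set.mem_Iic]
            have hb := (dSum_bounds N (a' ^^^ t) t hfct1 htlt hxI.1 hxI.2 ht1 ht2).2
            rw [hfct3] at hb
            have ha'P : (a':ℝ) + 1 ≤ (P:ℝ) := by exact_mod_cast ha'F.2
            have : ((P:ℝ)) * 2 ^ (-(N:ℤ)) ≤ a := by nlinarith
            nlinarith
          · exact dyadic_I_subset hnN hfct2 hxI
        have hdisj : (F : Set ℕ).PairwiseDisjoint (fun a' : ℕ =>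
            Ico (((a' ^^^ t : ℕ):ℝ) * 2 ^ (-(N:ℤ))) ((((a' ^^^ t : ℕ):ℝ)+1) * 2 ^ (-(N:ℤ)))) := by
          intro i _ j _ hij
          exact Ico_dyadic_disjoint (fun h => hij (by
            have := congrArg (fun z => z ^^^ t) h
            simpa [xor_cancel_right] using this))
        have hvol : volume (⋃ a' ∈ F, Ico (((a' ^^^ t : ℕ):ℝ) * 2 ^ (-(N:ℤ)))
            ((((a' ^^^ t : ℕ):ℝ)+1) * 2 ^ (-(N:ℤ))))
            = (F.card : ℝ≥0∞) * ENNReal.ofReal (2 ^ (-(N:ℤ))) := by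
          rw [measure_biUnion_finset hdisj (fun a' _ => measurableSet_Ico)]
          rw [Finset.sum_congr rfl (fun a' _ => vol_dyadic N (a' ^^^ t))]
          rw [Finset.sum_const, nsmul_eq_mul]
        have hcard : F.card = P - m * 2 ^ (N - n) := Nat.card_Ico _ _
        calc ENNReal.ofReal (s - 2 ^ (-(N:ℤ)))
            ≤ (F.card : ℝ≥0∞) * ENNReal.ofReal (2 ^ (-(N:ℤ))) := by
              rw [card_smul_ofReal _ htpN.le]
              apply ENNReal.ofReal_le_ofReal
              rw [hcard]
              have hc : ((P - m * 2 ^ (N - n) : ℕ) : ℝ) = (P:ℝ) - (m:ℝ) * 2 ^ (N - n) := by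
                have := hPge; push_cast [Nat.cast_sub this]; ring
              rw [hc, hs]
              push_cast
              have e1 : a * 2 ^ (N:ℤ) * 2 ^ (-(N:ℤ)) = a := by
                rw [mul_assoc, hcan, mul_one]
              nlinarith [mul_lt_mul_of_pos_right hP2 htpN, htpm, e1]
          _ = volume (⋃ a' ∈ F, Ico (((a' ^^^ t : ℕ):ℝ) * 2 ^ (-(N:ℤ)))
              ((((a' ^^^ t : ℕ):ℝ)+1) * 2 ^ (-(N:ℤ)))) := hvol.symm
          _ ≤ V := measure_mono hUsub
      · -- upper bound
        set G := Finset.Ico (m * 2 ^ (N - n)) (P+1) with hG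
        have hsub : (fun x => dSum x xt) ⁻¹' (Iic a) ∩
            Ico ((k:ℝ) * 2 ^ (-(n:ℤ))) (((k:ℝ)+1) * 2 ^ (-(n:ℤ)))
            ⊆ ⋃ a' ∈ G, Ico (((a' ^^^ t : ℕ):ℝ) * 2 ^ (-(N:ℤ)))
              ((((a' ^^^ t : ℕ):ℝ)+1) * 2 ^ (-(N:ℤ))) := by
          rintro x ⟨hxpre, hxI⟩
          obtain ⟨⟨hc1, hc2⟩, hclt, hck⟩ := floor_level hnN hk hxI.1 hxI.2 (N := N)
          set c : ℕ := (⌊x * 2 ^ (N:ℤ)⌋).toNat with hcdef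
          set a' : ℕ := c ^^^ t with ha'def
          have ha'm : a' >>> (N - n) = m := by
            rw [ha'def, shiftRight_xor, hck, htk₀]
          obtain ⟨hb1, hb2⟩ := shiftRight_bounds ha'm
          have hca : a' ^^^ t = c := by rw [ha'def, xor_cancel_right]
          have ha'lt2 : a' < 2 ^ N := by
            have h3 : (m+1) * 2 ^ (N - n) ≤ 2 ^ n * 2 ^ (N - n) :=
              Nat.mul_le_mul_right _ (by omega)
            rw [pow_split n N hnN] at h3
            omega
          have hΦge := (dSum_bounds N c t hclt htlt hc1 hc2 ht1 ht2).1
          rw [← ha'def] at hΦge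
          simp only [Set.mem_preimage, Set.mem_Iic] at hxpre
          have ha'le : (a':ℝ) ≤ a * 2 ^ (N:ℤ) := by
            have h4 : (a':ℝ) * 2 ^ (-(N:ℤ)) ≤ a := le_trans hΦge hxpre
            nlinarith
          have ha'P : a' ≤ P := by
            have : ((a':ℕ) : ℤ) ≤ ⌊a * 2 ^ (N:ℤ)⌋ := Int.le_floor.2 (by exact_mod_cast ha'le)
            omega
          simp only [Set.mem_iUnion]
          exact ⟨a', by rw [hG, Finset.mem_Ico]; omega, by rw [hca]; exact ⟨hc1, hc2⟩⟩
        have hcard : G.card = P + 1 - m * 2 ^ (N - n) := Nat.card_Ico _ _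
        calc V ≤ volume (⋃ a' ∈ G, Ico (((a' ^^^ t : ℕ):ℝ) * 2 ^ (-(N:ℤ)))
              ((((a' ^^^ t : ℕ):ℝ)+1) * 2 ^ (-(N:ℤ)))) := measure_mono hsub
          _ ≤ ∑ a' ∈ G, volume (Ico (((a' ^^^ t : ℕ):ℝ) * 2 ^ (-(N:ℤ)))
              ((((a' ^^^ t : ℕ):ℝ)+1) * 2 ^ (-(N:ℤ)))) := measure_biUnion_finset_le _ _
          _ = (G.card : ℝ≥0∞) * ENNReal.ofReal (2 ^ (-(N:ℤ))) := by
              rw [Finset.sum_congr rfl (fun a' _ => vol_dyadic N (a' ^^^ t)),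
                Finset.sum_const, nsmul_eq_mul]
          _ ≤ ENNReal.ofReal (s + 2 * 2 ^ (-(N:ℤ))) := by
              rw [card_smul_ofReal _ htpN.le]
              apply ENNReal.ofReal_le_ofReal
              rw [hcard]
              have hc : ((P + 1 - m * 2 ^ (N - n) : ℕ) : ℝ)
                  = (P:ℝ) + 1 - (m:ℝ) * 2 ^ (N - n) := by
                have : m * 2 ^ (N - n) ≤ P + 1 := by omega
                push_cast [Nat.cast_sub this]; ring
              rw [hc, hs]
              push_cast
              have e1 : a * 2 ^ (N:ℤ) * 2 ^ (-(N:ℤ)) = a := by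
                rw [mul_assoc, hcan, mul_one]
              nlinarith [mul_le_mul_of_nonneg_right hP1 htpN.le, htpm, e1]
    -- conclude from key
    have hVfin : V ≠ ⊤ := by
      apply ne_of_lt
      calc V ≤ volume (Ico ((k:ℝ) * 2 ^ (-(n:ℤ))) (((k:ℝ)+1) * 2 ^ (-(n:ℤ)))) :=
            measure_mono Set.inter_subset_right
        _ < ⊤ := measure_Ico_lt_top
    set v : ℝ := V.toReal with hv
    have hv0 : 0 ≤ v := ENNReal.toReal_nonneg
    have hbound : ∀ N : ℕ, n ≤ N → s - 2 ^ (-(N:ℤ)) ≤ v ∧ v ≤ s + 2 * 2 ^ (-(N:ℤ)) := by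
      intro N hnN
      obtain ⟨h1, h2⟩ := key N hnN
      constructor
      · rcases le_or_gt (s - 2 ^ (-(N:ℤ))) 0 with h | h
        · linarith
        · have := ENNReal.toReal_mono hVfin h1
          rwa [ENNReal.toReal_ofReal h.le] at this
      · have h3 := ENNReal.toReal_mono (by simp) h2
        rw [ENNReal.toReal_ofReal (by nlinarith [tp_pos N] : 0 ≤ s + 2 * 2 ^ (-(N:ℤ)))] at h3
        exact h3
    have hvs : v = s := by
      by_contra hne
      have hpos : 0 < |v - s| := abs_pos.2 (sub_ne_zero.2 hne)
      obtain ⟨N0, hN0⟩ := exists_pow_lt_of_lt_one (show (0:ℝ) < |v - s| / 2 by linarith)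
        (by norm_num : (1/2 : ℝ) < 1)
      set N := max n N0 with hNdef
      have htple : (2:ℝ) ^ (-(N:ℤ)) ≤ (1/2) ^ N0 := by
        rw [tp_eq_pow]
        exact pow_le_pow_of_le_one (by norm_num) (by norm_num) (le_max_right n N0)
      obtain ⟨hb1, hb2⟩ := hbound N (le_max_left _ _)
      have htpN := tp_pos N
      have habs : |v - s| ≤ 2 * 2 ^ (-(N:ℤ)) := abs_le.2 ⟨by linarith, by linarith⟩
      linarith
    rw [hRHS, Real.volume_Icc]
    rw [← ENNReal.ofReal_toReal hVfin, ← hv, hvs, hs]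

lemma map_dSum (n k₀ k : ℕ) (hk₀ : k₀ < 2 ^ n) (hk : k < 2 ^ n) {xt : ℝ}
    (hxt1 : (k₀:ℝ) * 2 ^ (-(n:ℤ)) ≤ xt) (hxt2 : xt < ((k₀:ℝ)+1) * 2 ^ (-(n:ℤ))) :
    Measure.map (fun x => dSum x xt)
        (volume.restrict (Ico ((k:ℝ) * 2 ^ (-(n:ℤ))) (((k:ℝ)+1) * 2 ^ (-(n:ℤ)))))
      = volume.restrict
          (Ico (((k ^^^ k₀ : ℕ):ℝ) * 2 ^ (-(n:ℤ))) ((((k ^^^ k₀ : ℕ):ℝ)+1) * 2 ^ (-(n:ℤ)))) := by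
  have hmeas := measurable_dSum xt
  haveI : IsFiniteMeasure (Measure.map (fun x => dSum x xt)
      (volume.restrict (Ico ((k:ℝ) * 2 ^ (-(n:ℤ))) (((k:ℝ)+1) * 2 ^ (-(n:ℤ)))))) := by
    constructor
    rw [Measure.map_apply hmeas MeasurableSet.univ]
    calc volume.restrict (Ico ((k:ℝ) * 2 ^ (-(n:ℤ))) (((k:ℝ)+1) * 2 ^ (-(n:ℤ)))) _
        ≤ volume.restrict (Ico ((k:ℝ) * 2 ^ (-(n:ℤ))) (((k:ℝ)+1) * 2 ^ (-(n:ℤ)))) univ :=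
          measure_mono (subset_univ _)
      _ = volume (Ico ((k:ℝ) * 2 ^ (-(n:ℤ))) (((k:ℝ)+1) * 2 ^ (-(n:ℤ)))) := by
          rw [Measure.restrict_apply_univ]
      _ < ⊤ := measure_Ico_lt_top
  apply MeasureTheory.Measure.ext_of_Iic
  intro a
  rw [Measure.map_apply hmeas measurableSet_Iic,
    Measure.restrict_apply (hmeas measurableSet_Iic),
    Measure.restrict_apply measurableSet_Iic]
  exact preimage_Iic_vol n k₀ k hk₀ hk hxt1 hxt2 a

lemma integral_sq_Ico (l r : ℝ) (h : l ≤ r) :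
    ∫ y in Ico l r, y ^ 2 = (r ^ 3 - l ^ 3) / 3 := by
  rw [integral_Ico_eq_integral_Ioo, ← integral_Ioc_eq_integral_Ioo,
    ← intervalIntegral.integral_of_le h, integral_pow]
  norm_num

lemma integral_dSum_sq (n k₀ k : ℕ) (hk₀ : k₀ < 2 ^ n) (hk : k < 2 ^ n) {xt : ℝ}
    (hxt1 : (k₀:ℝ) * 2 ^ (-(n:ℤ)) ≤ xt) (hxt2 : xt < ((k₀:ℝ)+1) * 2 ^ (-(n:ℤ))) :
    ∫ x in Ico ((k:ℝ) * 2 ^ (-(n:ℤ))) (((k:ℝ)+1) * 2 ^ (-(n:ℤ))), (dSum x xt) ^ 2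
      = 2 ^ (-(3 * (n:ℤ))) * ((3 * ((k ^^^ k₀ : ℕ):ℝ) ^ 2 + 3 * ((k ^^^ k₀ : ℕ):ℝ) + 1) / 3) := by
  have h1 : ∫ y in Ico (((k ^^^ k₀ : ℕ):ℝ) * 2 ^ (-(n:ℤ)))
        ((((k ^^^ k₀ : ℕ):ℝ)+1) * 2 ^ (-(n:ℤ))), y ^ 2
      = ∫ x in Ico ((k:ℝ) * 2 ^ (-(n:ℤ))) (((k:ℝ)+1) * 2 ^ (-(n:ℤ))), (dSum x xt) ^ 2 := by
    rw [← map_dSum n k₀ k hk₀ hk hxt1 hxt2]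
    exact integral_map (measurable_dSum xt).aemeasurable
      (Measurable.aestronglyMeasurable (by measurability))
  rw [← h1, integral_sq_Ico _ _ (by nlinarith [show (0:ℝ) ≤ 2 ^ (-(n:ℤ)) by positivity])]
  set m : ℝ := ((k ^^^ k₀ : ℕ):ℝ) with hm
  have e3 : ((2:ℝ) ^ (-(n:ℤ))) ^ 3 = 2 ^ (-(3 * (n:ℤ))) := by
    rw [← zpow_natCast ((2:ℝ) ^ (-(n:ℤ))) 3, ← zpow_mul]
    congr 1
    ring
  have expand : ((m+1) * 2 ^ (-(n:ℤ))) ^ 3 - (m * 2 ^ (-(n:ℤ))) ^ 3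
      = ((m+1)^3 - m^3) * ((2:ℝ) ^ (-(n:ℤ))) ^ 3 := by ring
  rw [expand, e3]
  ring

/-- for the dyadic step function `f = ∑_{k<2ⁿ} b_k χ_{[k2^{-n},(k+1)2^{-n})}`
and any `x̃ ∈ [k₀2^{-n},(k₀+1)2^{-n})`,
`∫_{ℝ₊} (x ⊕ x̃)² |f(x)|² dx = 2^{-3n} ∑_{k<2ⁿ} b_{k ⊻ k₀}² (3k²+3k+1)/3`. -/
theorem stmt12 (n : ℕ) (b : ℕ → ℝ) (k₀ : ℕ) (hk₀ : k₀ < 2 ^ n) (xt : ℝ)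
    (hxt : xt ∈ Set.Ico ((k₀ : ℝ) * 2 ^ (-(n:ℤ))) (((k₀ : ℝ) + 1) * 2 ^ (-(n:ℤ)))) :
    (∫ x, (dSum x xt) ^ 2 *
        (∑ k ∈ Finset.range (2 ^ n), b k *
          Set.indicator (Set.Ico ((k : ℝ) * 2 ^ (-(n:ℤ))) (((k : ℝ) + 1) * 2 ^ (-(n:ℤ))))
            (fun _ => (1:ℝ)) x) ^ 2 ∂μplus)
      = 2 ^ (-(3 * (n:ℤ))) *
          ∑ k ∈ Finset.range (2 ^ n),
            (b (k ^^^ k₀)) ^ 2 * ((3 * (k : ℝ) ^ 2 + 3 * (k : ℝ) + 1) / 3) := by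
  obtain ⟨hxt1, hxt2⟩ := hxt
  have htpn : (0:ℝ) < 2 ^ (-(n:ℤ)) := by positivity
  set I : ℕ → Set ℝ := fun k =>
    Set.Ico ((k : ℝ) * 2 ^ (-(n:ℤ))) (((k : ℝ) + 1) * 2 ^ (-(n:ℤ))) with hI
  have huniq : ∀ {k k' : ℕ} {x : ℝ}, x ∈ I k → x ∈ I k' → k = k' := by
    intro k k' x hk hk'
    obtain ⟨h1, h2⟩ := hk
    obtain ⟨h3, h4⟩ := hk'
    have e1 : (k:ℝ) < (k':ℝ) + 1 := by nlinarith
    have e2 : (k':ℝ) < (k:ℝ) + 1 := by nlinarith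
    have : k < k' + 1 := by exact_mod_cast e1
    have : k' < k + 1 := by exact_mod_cast e2
    omega
  -- pointwise identity
  have hpt : ∀ x, (dSum x xt) ^ 2 *
      (∑ k ∈ Finset.range (2 ^ n), b k * Set.indicator (I k) (fun _ => (1:ℝ)) x) ^ 2
      = ∑ k ∈ Finset.range (2 ^ n),
          (b k) ^ 2 * Set.indicator (I k) (fun y => (dSum y xt) ^ 2) x := by
    intro x
    by_cases hx : ∃ k1, k1 ∈ Finset.range (2 ^ n) ∧ x ∈ I k1
    · obtain ⟨k1, hk1mem, hk1⟩ := hx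
      have hsum1 : ∑ k ∈ Finset.range (2 ^ n), b k * Set.indicator (I k) (fun _ => (1:ℝ)) x
          = b k1 := by
        rw [Finset.sum_eq_single k1]
        · rw [Set.indicator_of_mem hk1, mul_one]
        · intro k hkm hkne
          rw [Set.indicator_of_notMem (fun hmem => hkne (huniq hmem hk1)), mul_zero]
        · intro h; exact absurd hk1mem h
      have hsum2 : ∑ k ∈ Finset.range (2 ^ n),
          (b k) ^ 2 * Set.indicator (I k) (fun y => (dSum y xt) ^ 2) x
          = (b k1) ^ 2 * (dSum x xt) ^ 2 := by
        rw [Finset.sum_eq_single k1]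
        · rw [Set.indicator_of_mem hk1]
        · intro k hkm hkne
          rw [Set.indicator_of_notMem (fun hmem => hkne (huniq hmem hk1)), mul_zero]
        · intro h; exact absurd hk1mem h
      rw [hsum1, hsum2]; ring
    · push_neg at hx
      have hsum1 : ∑ k ∈ Finset.range (2 ^ n), b k * Set.indicator (I k) (fun _ => (1:ℝ)) x
          = 0 := Finset.sum_eq_zero fun k hkm => by
        rw [Set.indicator_of_notMem (hx k hkm), mul_zero]
      have hsum2 : ∑ k ∈ Finset.range (2 ^ n),
          (b k) ^ 2 * Set.indicator (I k) (fun y => (dSum y xt) ^ 2) x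
          = 0 := Finset.sum_eq_zero fun k hkm => by
        rw [Set.indicator_of_notMem (hx k hkm), mul_zero]
      rw [hsum1, hsum2]; ring
  rw [integral_congr_ae (ae_of_all _ hpt)]
  -- integrability
  have hIsub : ∀ k : ℕ, I k ⊆ Set.Ici (0:ℝ) := by
    intro k x hx
    exact le_trans (by positivity) hx.1
  have hrestrict : ∀ k : ℕ, μplus.restrict (I k) = volume.restrict (I k) := by
    intro k
    rw [μplus, Measure.restrict_restrict measurableSet_Ico,
      Set.inter_eq_left.2 (hIsub k)]
  have hone : ((2:ℝ) ^ n) * 2 ^ (-(n:ℤ)) = 1 := by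
    rw [← zpow_natCast (2:ℝ) n, ← zpow_add₀ (by norm_num : (2:ℝ) ≠ 0)]
    simp
  have hbdd : ∀ k, k < 2 ^ n → ∀ x ∈ I k, ‖(dSum x xt) ^ 2‖ ≤ 1 := by
    intro k hk x hx
    obtain ⟨hb1, hb2⟩ := dSum_bounds n k k₀ hk hk₀ hx.1 hx.2 hxt1 hxt2
    have hm1 : ((k ^^^ k₀ : ℕ):ℝ) + 1 ≤ (2:ℝ) ^ n := by
      exact_mod_cast Nat.xor_lt_two_pow hk hk₀
    have h0 : 0 ≤ dSum x xt := le_trans (by positivity) hb1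
    have h1 : dSum x xt ≤ 1 := by nlinarith
    rw [Real.norm_eq_abs, abs_of_nonneg (by positivity)]
    nlinarith
  have hint : ∀ k ∈ Finset.range (2 ^ n),
      Integrable (fun x => (b k) ^ 2 * Set.indicator (I k) (fun y => (dSum y xt) ^ 2) x) μplus := by
    intro k hkm
    apply Integrable.const_mul
    rw [integrable_indicator_iff measurableSet_Ico]
    unfold IntegrableOn
    rw [hrestrict k]
    apply Measure.integrableOn_of_bounded (M := 1)
    · exact ne_of_lt measure_Ico_lt_top
    · exact ((measurable_dSum xt).pow_const 2).aestronglyMeasurable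
    · exact (ae_restrict_iff' measurableSet_Ico).2
        (ae_of_all _ (hbdd k (Finset.mem_range.mp hkm)))
  rw [integral_finset_sum _ hint]
  have hterm : ∀ k ∈ Finset.range (2 ^ n),
      ∫ x, (b k) ^ 2 * Set.indicator (I k) (fun y => (dSum y xt) ^ 2) x ∂μplus
        = (b k) ^ 2 * (2 ^ (-(3 * (n:ℤ))) *
            ((3 * ((k ^^^ k₀ : ℕ):ℝ) ^ 2 + 3 * ((k ^^^ k₀ : ℕ):ℝ) + 1) / 3)) := by
    intro k hkm
    rw [integral_const_mul, integral_indicator measurableSet_Ico]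
    have : ∫ x in I k, (dSum x xt) ^ 2 ∂μplus = ∫ x in I k, (dSum x xt) ^ 2 := by
      rw [show ∀ g : ℝ → ℝ, ∫ x in I k, g x ∂μplus = ∫ x, g x ∂(μplus.restrict (I k))
        from fun g => rfl, hrestrict k]
    rw [this, hI]
    rw [integral_dSum_sq n k₀ k hk₀ (Finset.mem_range.mp hkm) hxt1 hxt2]
  rw [Finset.sum_congr rfl hterm]
  -- reindex
  rw [Finset.mul_sum]
  apply Finset.sum_nbij' (fun k => k ^^^ k₀) (fun k => k ^^^ k₀)
  · intro k hkm
    exact Finset.mem_range.mpr (Nat.xor_lt_two_pow (Finset.mem_range.mp hkm) hk₀)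
  · intro k hkm
    exact Finset.mem_range.mpr (Nat.xor_lt_two_pow (Finset.mem_range.mp hkm) hk₀)
  · intro k _; exact xor_cancel_right _ _
  · intro k _; exact xor_cancel_right _ _
  · intro k hkm
    rw [xor_cancel_right]
    ring

end Aux
end
end
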